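/- arXiv:1212.5022 — 5 statements merged into one kernel-verified Lean document; each statement's English description precedes it below -/
import Mathlib

section
/- Let l, m, n be nonnegative integers with gcd(l,m) = gcd(l,n) = 1. Then the circle action on 𝕊³_ℍ × 𝕊³ defined by x·(p,(z,w)) = (p x^l, (x^m z, x^n w)) is free: if x ∈ 𝕊¹ satisfies p x^l = p, x^m z = z and x^n w = w for some p ∈ 𝕊³_ℍ and some (z,w) ∈ ℂ² with |z|² + |w|² = 1, then x = 1. -/
noncomputable section

open Quaternion

/-- The embedding of `ℂ` into the quaternions, sending `a + b·i` to the quaternion `a + b·i`. -/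
def cq (x : ℂ) : Quaternion ℝ := ⟨x.re, x.im, 0, 0⟩

/-- **Freeness of the circle action.**
Let `l, m, n` be nonnegative integers with `gcd(l,m) = gcd(l,n) = 1`.  If `x ∈ 𝕊¹` satisfies
`p x^l = p`, `x^m z = z` and `x^n w = w` for some unit quaternion `p` and some `(z,w) ∈ ℂ²`
with `|z|² + |w|² = 1`, then `x = 1`; that is, the circle action
`x·(p,(z,w)) = (p x^l, (x^m z, x^n w))` on `𝕊³_ℍ × 𝕊³` is free. -/
theorem circle_action_free (l m n : ℕ) (hlm : Nat.gcd l m = 1) (hln : Nat.gcd l n = 1)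
    (x : Circle) (p : Quaternion ℝ) (hp : ‖p‖ = 1)
    (z w : ℂ) (hzw : Complex.normSq z + Complex.normSq w = 1)
    (h1 : p * cq ((x : ℂ) ^ l) = p) (h2 : (x : ℂ) ^ m * z = z) (h3 : (x : ℂ) ^ n * w = w) :
    x = 1 := by
  have hp0 : p ≠ 0 := by intro h; simp [h] at hp
  -- from h1: cq (x^l) = 1
  have hcq : cq ((x : ℂ) ^ l) = 1 := by
    have := mul_left_cancel₀ hp0 (h1.trans (mul_one p).symm)
    exact this
  have hxl : (x : ℂ) ^ l = 1 := by
    have hre : ((x : ℂ) ^ l).re = 1 := congrArg QuaternionAlgebra.re hcq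
    have him : ((x : ℂ) ^ l).im = 0 := congrArg QuaternionAlgebra.imI hcq
    exact Complex.ext hre him
  have hdl : orderOf (x : ℂ) ∣ l := orderOf_dvd_of_pow_eq_one hxl
  have key : ∀ k : ℕ, Nat.gcd l k = 1 → (x : ℂ) ^ k = 1 → x = 1 := by
    intro k hk hxk
    have hdk : orderOf (x : ℂ) ∣ k := orderOf_dvd_of_pow_eq_one hxk
    have : orderOf (x : ℂ) ∣ 1 := hk ▸ Nat.dvd_gcd hdl hdk
    have h1' : (x : ℂ) = 1 := orderOf_eq_one_iff.mp (Nat.dvd_one.mp this)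
    ext
    simpa using h1'
  rcases eq_or_ne z 0 with hz | hz
  · have hw : w ≠ 0 := by
      intro hw
      rw [hz, hw] at hzw
      simp at hzw
    have : (x : ℂ) ^ n = 1 := by
      have := mul_right_cancel₀ hw (h3.trans (one_mul w).symm)
      exact this
    exact key n hln this
  · have : (x : ℂ) ^ m = 1 := mul_right_cancel₀ hz (h2.trans (one_mul z).symm)
    exact key m hlm this
end
end

section
/- Let d, q₁, q₂ be positive integers, set n₁ = d·q₁ and n₂ = d·q₂, let b₁, b₂ be integers with 0 ≤ b_j < q_j and gcd(b_j, q_j) = 1 for j = 1, 2, and let k ∈ ℤ. Set l = b₁q₂ + b₂q₁ + k·q₁q₂. Then the group presented by two generators e₁, e₂ subject to the relations e₁^{n₁} = 1, e₂^{n₂} = 1, e₁^{q₁} = e₂^{q₂}, and e₁^{b₁} = e₂^{-(b₂ + k·q₂)} is a cyclic group of order gcd(n₁, n₂, l) (where gcd denotes the nonnegative greatest common divisor of integers); that is, this presented group is isomorphic to ℤ/gcd(n₁, n₂, l)ℤ. -/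
noncomputable section

private lemma gcd_pow_eq_one {G : Type*} [Group G] (g : G) {a b : ℤ}
    (ha : g ^ a = 1) (hb : g ^ b = 1) : g ^ (Int.gcd a b : ℤ) = 1 := by
  rw [Int.gcd_eq_gcd_ab a b, zpow_add, zpow_mul, zpow_mul, ha, hb, one_zpow, one_zpow, one_mul]

private lemma ofAdd_int_zpow (m : ℕ) (z w : ℤ) :
    (Multiplicative.ofAdd ((z : ZMod m))) ^ w = Multiplicative.ofAdd ((z * w : ℤ) : ZMod m) := by
  rw [← ofAdd_zsmul]
  congr 1
  rw [zsmul_eq_mul]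
  push_cast
  ring

private lemma ofAdd_int_pow (m : ℕ) (z : ℤ) (w : ℕ) :
    (Multiplicative.ofAdd ((z : ZMod m))) ^ w = Multiplicative.ofAdd ((z * w : ℤ) : ZMod m) := by
  rw [← zpow_natCast, ofAdd_int_zpow]

private lemma ofAdd_int_eq_one (m : ℕ) (z : ℤ) (h : (m : ℤ) ∣ z) :
    Multiplicative.ofAdd ((z : ZMod m)) = 1 := by
  rw [(ZMod.intCast_zmod_eq_zero_iff_dvd z m).mpr h]
  rfl

private lemma ofAdd_int_eq (m : ℕ) (z w : ℤ) (h : (m : ℤ) ∣ z - w) :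
    Multiplicative.ofAdd ((z : ZMod m)) = Multiplicative.ofAdd ((w : ZMod m)) := by
  congr 1
  have := (ZMod.intCast_zmod_eq_zero_iff_dvd (z - w) m).mpr h
  push_cast at this
  linear_combination this

/-- The relators `e₁^{n₁}`, `e₂^{n₂}`, `e₁^{q₁}·e₂^{-q₂}` and `e₁^{b₁}·e₂^{b₂+k·q₂}`,
corresponding to the relations `e₁^{n₁} = 1`, `e₂^{n₂} = 1`, `e₁^{q₁} = e₂^{q₂}` and
`e₁^{b₁} = e₂^{-(b₂+k·q₂)}`, where `e₁ = of true` and `e₂ = of false`. -/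
def fundGroupRels (n₁ n₂ q₁ q₂ : ℕ) (b₁ b₂ k : ℤ) : Set (FreeGroup Bool) :=
  {FreeGroup.of true ^ n₁, FreeGroup.of false ^ n₂,
    FreeGroup.of true ^ q₁ * (FreeGroup.of false ^ q₂)⁻¹,
    FreeGroup.of true ^ b₁ * (FreeGroup.of false ^ (-(b₂ + k * q₂)))⁻¹}

/-- **The fundamental group computation.**
Let `d, q₁, q₂` be positive integers, `n₁ = d·q₁`, `n₂ = d·q₂`, let `b₁, b₂` be integers with
`0 ≤ bⱼ < qⱼ` and `gcd(bⱼ, qⱼ) = 1`, let `k ∈ ℤ` and set `l = b₁q₂ + b₂q₁ + k·q₁q₂`.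
Then the group presented by generators `e₁, e₂` and relations `e₁^{n₁} = 1`, `e₂^{n₂} = 1`,
`e₁^{q₁} = e₂^{q₂}`, `e₁^{b₁} = e₂^{-(b₂+k·q₂)}` is cyclic of order `gcd(n₁, n₂, l)`, i.e.
isomorphic to `ℤ/gcd(n₁,n₂,l)ℤ`. -/
theorem presentedGroup_cyclic (d q₁ q₂ : ℕ) (hd : 0 < d) (hq₁ : 0 < q₁) (hq₂ : 0 < q₂)
    (n₁ n₂ : ℕ) (hn₁ : n₁ = d * q₁) (hn₂ : n₂ = d * q₂)
    (b₁ b₂ k : ℤ)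
    (hb₁ : 0 ≤ b₁ ∧ b₁ < q₁ ∧ Int.gcd b₁ q₁ = 1)
    (hb₂ : 0 ≤ b₂ ∧ b₂ < q₂ ∧ Int.gcd b₂ q₂ = 1)
    (l : ℤ) (hl : l = b₁ * q₂ + b₂ * q₁ + k * (q₁ * q₂)) :
    Nonempty (PresentedGroup (fundGroupRels n₁ n₂ q₁ q₂ b₁ b₂ k) ≃*
      Multiplicative (ZMod (Int.gcd (Int.gcd (n₁ : ℤ) (n₂ : ℤ) : ℤ) l))) := by
  obtain ⟨hb₁0, hb₁q, hb₁g⟩ := hb₁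
  obtain ⟨hb₂0, hb₂q, hb₂g⟩ := hb₂
  set c : ℤ := b₂ + k * q₂ with hc
  set m : ℕ := Int.gcd (Int.gcd (n₁ : ℤ) (n₂ : ℤ) : ℤ) l with hm
  set rels := fundGroupRels n₁ n₂ q₁ q₂ b₁ b₂ k with hrelsdef
  set E₁ : PresentedGroup rels := PresentedGroup.of true with hE₁
  set E₂ : PresentedGroup rels := PresentedGroup.of false with hE₂
  -- basic relations
  have hrel : ∀ r ∈ rels, PresentedGroup.mk rels r = 1 := fun r hr =>
    (QuotientGroup.eq_one_iff r).mpr (Subgroup.subset_normalClosure hr)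
  have h1 : E₁ ^ ((n₁ : ℕ) : ℤ) = 1 := by
    have := hrel (FreeGroup.of true ^ n₁) (by simp [hrelsdef, fundGroupRels])
    rw [map_pow] at this
    rw [zpow_natCast]
    exact this
  have h2 : E₂ ^ ((n₂ : ℕ) : ℤ) = 1 := by
    have := hrel (FreeGroup.of false ^ n₂) (by simp [hrelsdef, fundGroupRels])
    rw [map_pow] at this
    rw [zpow_natCast]
    exact this
  have h3 : E₁ ^ ((q₁ : ℕ) : ℤ) = E₂ ^ ((q₂ : ℕ) : ℤ) := by
    have := hrel (FreeGroup.of true ^ q₁ * (FreeGroup.of false ^ q₂)⁻¹)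
      (by simp [hrelsdef, fundGroupRels])
    rw [map_mul, map_inv, map_pow, map_pow, mul_inv_eq_one] at this
    rw [zpow_natCast, zpow_natCast]
    exact this
  have h4 : E₁ ^ b₁ = E₂ ^ (-c) := by
    have := hrel (FreeGroup.of true ^ b₁ * (FreeGroup.of false ^ (-(b₂ + k * q₂)))⁻¹)
      (by simp [hrelsdef, fundGroupRels])
    rw [map_mul, map_inv, map_zpow, map_zpow, mul_inv_eq_one] at this
    exact this
  have h4' : E₁ ^ (-b₁) = E₂ ^ c := by
    rw [zpow_neg, h4, ← zpow_neg, neg_neg]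
  -- Bezout coefficients
  set x : ℤ := Int.gcdA b₁ q₁ with hx
  set y : ℤ := Int.gcdB b₁ q₁ with hy
  have hxy : b₁ * x + (q₁ : ℤ) * y = 1 := by
    have := Int.gcd_eq_gcd_ab b₁ (q₁ : ℤ)
    rw [hb₁g] at this
    exact_mod_cast this.symm
  obtain ⟨u, v, huv⟩ : ∃ u v : ℤ, c * u + (q₂ : ℤ) * v = 1 := by
    refine ⟨Int.gcdA b₂ q₂, Int.gcdB b₂ q₂ - k * Int.gcdA b₂ q₂, ?_⟩
    have := Int.gcd_eq_gcd_ab b₂ (q₂ : ℤ)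
    rw [hb₂g] at this
    push_cast at this
    rw [hc]; linear_combination -this
  set a : ℤ := -c * x + (q₂ : ℤ) * y with ha
  have hlc : l = b₁ * q₂ + c * q₁ := by rw [hl, hc]; ring
  -- E₁ is a power of E₂
  have he1 : E₁ = E₂ ^ a := by
    calc E₁ = E₁ ^ (b₁ * x + (q₁ : ℤ) * y) := by rw [hxy, zpow_one]
    _ = (E₁ ^ b₁) ^ x * (E₁ ^ ((q₁ : ℕ) : ℤ)) ^ y := by
        rw [← zpow_mul, ← zpow_mul, ← zpow_add]
    _ = (E₂ ^ (-c)) ^ x * (E₂ ^ ((q₂ : ℕ) : ℤ)) ^ y := by rw [h4, h3]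
    _ = E₂ ^ a := by
        rw [← zpow_mul, ← zpow_mul, ← zpow_add, ha]
  -- E₂ is a power of E₁
  have he2 : E₂ = E₁ ^ (-b₁ * u + (q₁ : ℤ) * v) := by
    calc E₂ = E₂ ^ (c * u + (q₂ : ℤ) * v) := by rw [huv, zpow_one]
    _ = (E₂ ^ c) ^ u * (E₂ ^ ((q₂ : ℕ) : ℤ)) ^ v := by
        rw [← zpow_mul, ← zpow_mul, ← zpow_add]
    _ = (E₁ ^ (-b₁)) ^ u * (E₁ ^ ((q₁ : ℕ) : ℤ)) ^ v := by rw [h4', h3]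
    _ = E₁ ^ (-b₁ * u + (q₁ : ℤ) * v) := by rw [← zpow_mul, ← zpow_mul, ← zpow_add]
  have hn1' : E₂ ^ ((n₁ : ℕ) : ℤ) = 1 := by
    rw [he2, ← zpow_mul, mul_comm, zpow_mul, h1, one_zpow]
  have hl1 : E₂ ^ l = 1 := by
    have : E₂ ^ l = (E₂ ^ ((q₂ : ℕ) : ℤ)) ^ b₁ * (E₂ ^ c) ^ (q₁ : ℤ) := by
      rw [← zpow_mul, ← zpow_mul, ← zpow_add]
      congr 1
      rw [hlc]; ring
    rw [this, ← h3, ← h4', ← zpow_mul, ← zpow_mul, ← zpow_add]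
    have hz : (q₁ : ℤ) * b₁ + -b₁ * (q₁ : ℤ) = 0 := by ring
    rw [hz, zpow_zero]
  have hm1 : E₂ ^ ((m : ℕ) : ℤ) = 1 := gcd_pow_eq_one E₂ (gcd_pow_eq_one E₂ hn1' h2) hl1
  -- divisibilities
  have hdvd_n₁ : (m : ℤ) ∣ (n₁ : ℤ) :=
    (Int.gcd_dvd_left _ _).trans (Int.gcd_dvd_left _ _)
  have hdvd_n₂ : (m : ℤ) ∣ (n₂ : ℤ) :=
    (Int.gcd_dvd_left _ _).trans (Int.gcd_dvd_right _ _)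
  have hdvd_l : (m : ℤ) ∣ l := Int.gcd_dvd_right _ _
  have key1 : a * q₁ - q₂ = -(x * l) := by
    rw [hlc, ha]; linear_combination (q₂ : ℤ) * hxy
  have key2 : a * b₁ + c = y * l := by
    rw [hlc, ha]; linear_combination (-c) * hxy
  -- the homomorphism to ZMod m
  set M := Multiplicative (ZMod m) with hM
  set f : Bool → M := fun i =>
    Multiplicative.ofAdd (((if i then a else 1 : ℤ)) : ZMod m) with hf
  have hftrue : f true = Multiplicative.ofAdd ((a : ZMod m)) := by simp [hf]
  have hffalse : f false = Multiplicative.ofAdd (((1 : ℤ) : ZMod m)) := by simp [hf]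
  have hrels : ∀ r ∈ rels, FreeGroup.lift f r = 1 := by
    intro r hr
    simp only [hrelsdef, fundGroupRels, Set.mem_insert_iff, Set.mem_singleton_iff] at hr
    rcases hr with rfl | rfl | rfl | rfl
    · rw [map_pow, FreeGroup.lift_apply_of, hftrue, ofAdd_int_pow]
      refine ofAdd_int_eq_one m _ ?_
      have : a * (n₁ : ℤ) = (d : ℤ) * (a * q₁ - q₂) + (n₂ : ℤ) := by
        rw [hn₁, hn₂]; push_cast; ring
      rw [this, key1]
      exact dvd_add ((dvd_neg.mpr (hdvd_l.mul_left _)).mul_left _) hdvd_n₂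
    · rw [map_pow, FreeGroup.lift_apply_of, hffalse, ofAdd_int_pow]
      exact ofAdd_int_eq_one m _ (by simpa using hdvd_n₂)
    · rw [map_mul, map_inv, map_pow, map_pow, FreeGroup.lift_apply_of, FreeGroup.lift_apply_of,
        hftrue, hffalse, ofAdd_int_pow, ofAdd_int_pow, mul_inv_eq_one]
      refine ofAdd_int_eq m _ _ ?_
      have : a * (q₁ : ℤ) - 1 * (q₂ : ℤ) = -(x * l) := by rw [← key1]; ring
      rw [this]
      exact dvd_neg.mpr (hdvd_l.mul_left _)
    · rw [map_mul, map_inv, map_zpow, map_zpow, FreeGroup.lift_apply_of, FreeGroup.lift_apply_of,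
        hftrue, hffalse, ofAdd_int_zpow, ofAdd_int_zpow, mul_inv_eq_one]
      refine ofAdd_int_eq m _ _ ?_
      have : a * b₁ - 1 * (-(b₂ + k * q₂)) = y * l := by rw [← key2, hc]; ring
      rw [this]
      exact hdvd_l.mul_left _
  set φ : PresentedGroup rels →* M := PresentedGroup.toGroup hrels with hφ
  -- the homomorphism back
  have hmker : (zmultiplesHom (Additive (PresentedGroup rels)) (Additive.ofMul E₂))
      ((m : ℕ) : ℤ) = 0 := by
    rw [zmultiplesHom_apply, ← ofMul_zpow, hm1]
    rfl
  set ψ' : ZMod m →+ Additive (PresentedGroup rels) :=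
    ZMod.lift m ⟨zmultiplesHom _ (Additive.ofMul E₂), hmker⟩ with hψ'
  set ψ : M →* PresentedGroup rels := AddMonoidHom.toMultiplicativeLeft ψ' with hψ
  have hψeval : ∀ z : ℤ, ψ (Multiplicative.ofAdd ((z : ZMod m))) = E₂ ^ z := by
    intro z
    show Additive.toMul (ψ' ((z : ZMod m))) = E₂ ^ z
    rw [hψ', ZMod.lift_coe]
    show Additive.toMul (z • Additive.ofMul E₂) = E₂ ^ z
    rw [toMul_zsmul]
    rfl
  -- the two compositions
  have comp1 : ψ.comp φ = MonoidHom.id _ := by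
    apply PresentedGroup.ext
    intro i
    rcases i with _ | _
    · simp only [MonoidHom.comp_apply, MonoidHom.id_apply, hφ, PresentedGroup.toGroup.of]
      rw [hffalse, hψeval, zpow_one]
    · simp only [MonoidHom.comp_apply, MonoidHom.id_apply, hφ, PresentedGroup.toGroup.of]
      rw [hftrue, hψeval, ← he1]
  have comp2 : φ.comp ψ = MonoidHom.id M := by
    refine MonoidHom.ext fun w => ?_
    obtain ⟨z, hz⟩ := ZMod.intCast_surjective (Multiplicative.toAdd w)
    have hw : w = Multiplicative.ofAdd ((z : ZMod m)) := by rw [hz]; rfl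
    rw [hw]
    simp only [MonoidHom.comp_apply, MonoidHom.id_apply]
    rw [hψeval, map_zpow]
    have : φ E₂ = Multiplicative.ofAdd (((1 : ℤ) : ZMod m)) := by
      rw [hφ]
      exact (PresentedGroup.toGroup.of hrels).trans hffalse
    rw [this, ofAdd_int_zpow, one_mul]
  exact ⟨MonoidHom.toMulEquiv φ ψ comp1 comp2⟩
end
end

section
/- Let l, n₁, n₂ be positive integers with gcd(l, n₁) = gcd(l, n₂) = 1, and let d ≥ 3 be an integer dividing both n₁ and n₂. Let ζ = cos(2π/d) + i·sin(2π/d), a unit quaternion. Then the set of points of 𝔑^l_{n₁,n₂} fixed by ζ under the left action of the unit quaternions (i.e., {X ∈ 𝔑^l_{n₁,n₂} : ζ·X = X}) equals the image under the quotient map of the set (𝕊¹ ∪ 𝕊¹·j) × 𝕊³ ⊂ 𝕊³_ℍ × 𝕊³. -/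
noncomputable section

open Quaternion

/-- The total space `𝕊³_ℍ × 𝕊³`: pairs of a unit quaternion and a point `(z,w) ∈ ℂ²`
with `|z|² + |w|² = 1`. -/
abbrev TotalSpace : Type :=
  {a : Quaternion ℝ × (ℂ × ℂ) // ‖a.1‖ = 1 ∧ Complex.normSq a.2.1 + Complex.normSq a.2.2 = 1}

/-- The circle action `x · (p,(z,w)) = (p x^l, (x^m z, x^n w))` on the ambient space. -/
def circleAct (l m n : ℕ) (x : Circle) (a : Quaternion ℝ × (ℂ × ℂ)) :
    Quaternion ℝ × (ℂ × ℂ) :=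
  (a.1 * cq ((x : ℂ) ^ l), ((x : ℂ) ^ m * a.2.1, (x : ℂ) ^ n * a.2.2))

/-- The orbit relation of the circle action on `𝕊³_ℍ × 𝕊³`. -/
def NRel (l m n : ℕ) (a b : TotalSpace) : Prop :=
  ∃ x : Circle, circleAct l m n x a.1 = b.1

/-- The orbit space `𝔑^l_{m,n}`, with the quotient topology. -/
abbrev NSpace (l m n : ℕ) : Type := Quot (NRel l m n)


/-- The left action of the group of unit quaternions on `𝔑^l_{m,n}`,
`g·[(p,(z,w))] = [(gp,(z,w))]`. -/
def quatAct (l m n : ℕ) (g : Metric.sphere (0 : Quaternion ℝ) 1) :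
    NSpace l m n → NSpace l m n :=
  Quot.lift
    (fun a => Quot.mk _ ⟨((g : Quaternion ℝ) * a.1.1, a.1.2), by
      refine ⟨?_, a.2.2⟩
      have hg : ‖(g : Quaternion ℝ)‖ = 1 := mem_sphere_zero_iff_norm.mp g.2
      rw [norm_mul, hg, a.2.1, mul_one]⟩)
    (by
      rintro ⟨⟨p, z, w⟩, hp, hzw⟩ ⟨⟨p', z', w'⟩, hp', hzw'⟩ ⟨x, hx⟩
      apply Quot.sound
      refine ⟨x, ?_⟩
      simp only [circleAct, Prod.mk.injEq] at hx ⊢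
      exact ⟨by rw [mul_assoc, hx.1], hx.2⟩)


/-- The quaternion unit `j`. -/
def jq : Quaternion ℝ := ⟨0, 0, 1, 0⟩

/-! ### Auxiliary lemmas -/

lemma cq_mul (x y : ℂ) : cq (x * y) = cq x * cq y := by
  ext <;> simp only [Quaternion.re_mul, Quaternion.imI_mul, Quaternion.imJ_mul, Quaternion.imK_mul] <;> simp [cq, Complex.mul_re, Complex.mul_im]

lemma cq_one : cq 1 = 1 := by ext <;> simp [cq]

lemma cq_zero : cq 0 = 0 := by ext <;> simp [cq]

lemma cq_inj {x y : ℂ} (h : cq x = cq y) : x = y := by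
  rw [Quaternion.ext_iff] at h
  exact Complex.ext h.1 h.2.1

lemma jq_mul_cq (x : ℂ) : jq * cq x = cq (starRingEnd ℂ x) * jq := by
  ext <;> simp only [Quaternion.re_mul, Quaternion.imI_mul, Quaternion.imJ_mul, Quaternion.imK_mul] <;> simp [cq, jq]

lemma decomp (p : Quaternion ℝ) : p = cq ⟨p.re, p.imI⟩ + cq ⟨p.imJ, p.imK⟩ * jq := by
  ext <;> simp only [Quaternion.re_add, Quaternion.imI_add, Quaternion.imJ_add, Quaternion.imK_add, Quaternion.re_mul, Quaternion.imI_mul, Quaternion.imJ_mul, Quaternion.imK_mul] <;> simp [cq, jq]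

lemma normSq_cq_add_cq_mul_jq (α β : ℂ) :
    Quaternion.normSq (cq α + cq β * jq) = Complex.normSq α + Complex.normSq β := by
  simp only [Quaternion.normSq_def', Quaternion.re_add, Quaternion.imI_add, Quaternion.imJ_add, Quaternion.imK_add, Quaternion.re_mul, Quaternion.imI_mul, Quaternion.imJ_mul, Quaternion.imK_mul]
  simp [cq, jq, Complex.normSq_apply]; ring

lemma mul_decomp (a α β y : ℂ) :
    cq a * (cq α + cq β * jq) * cq y
      = cq (a * α * y) + cq (a * β * (starRingEnd ℂ y)) * jq := by
  rw [mul_add, ← cq_mul, add_mul, mul_assoc (cq a), mul_assoc, jq_mul_cq,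
    ← mul_assoc (cq β), ← cq_mul, ← mul_assoc, ← cq_mul, ← cq_mul, mul_assoc a β]

lemma decomp_inj {α β α' β' : ℂ} (h : cq α + cq β * jq = cq α' + cq β' * jq) :
    α = α' ∧ β = β' := by
  rw [Quaternion.ext_iff] at h
  simp only [Quaternion.re_add, Quaternion.imI_add, Quaternion.imJ_add, Quaternion.imK_add, Quaternion.re_mul, Quaternion.imI_mul, Quaternion.imJ_mul, Quaternion.imK_mul] at h
  simp only [cq, jq] at h
  obtain ⟨h1, h2, h3, h4⟩ := h
  simp at h1 h2 h3 h4
  exact ⟨Complex.ext h1 h2, Complex.ext h3 h4⟩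

lemma circleAct_one (l m n : ℕ) (a : Quaternion ℝ × (ℂ × ℂ)) :
    circleAct l m n 1 a = a := by
  simp [circleAct, cq_one]

lemma circleAct_mul (l m n : ℕ) (x y : Circle) (a : Quaternion ℝ × (ℂ × ℂ)) :
    circleAct l m n x (circleAct l m n y a) = circleAct l m n (x * y) a := by
  simp only [circleAct, Prod.mk.injEq]
  push_cast
  refine ⟨?_, by rw [mul_pow]; ring, by rw [mul_pow]; ring⟩
  rw [mul_assoc, ← cq_mul, mul_pow]
  ring_nf

lemma nrel_equivalence (l m n : ℕ) : Equivalence (NRel l m n) := by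
  constructor
  · exact fun a => ⟨1, circleAct_one l m n a.1⟩
  · rintro a b ⟨x, hx⟩
    refine ⟨x⁻¹, ?_⟩
    rw [← hx, circleAct_mul, inv_mul_cancel, circleAct_one]
  · rintro a b c ⟨x, hx⟩ ⟨y, hy⟩
    exact ⟨y * x, by rw [← circleAct_mul, hx, hy]⟩

lemma quatAct_mk (l m n : ℕ) (g : Metric.sphere (0 : Quaternion ℝ) 1) (a : TotalSpace) :
    quatAct l m n g (Quot.mk _ a) = Quot.mk _ ⟨((g : Quaternion ℝ) * a.1.1, a.1.2), by
      refine ⟨?_, a.2.2⟩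
      have hg : ‖(g : Quaternion ℝ)‖ = 1 := mem_sphere_zero_iff_norm.mp g.2
      rw [norm_mul, hg, a.2.1, mul_one]⟩ := rfl

/-- **The fixed point set of `ζ` in `𝔑^l_{n₁,n₂}`.**
Let `l, n₁, n₂` be positive integers with `gcd(l,n₁) = gcd(l,n₂) = 1`, let `d ≥ 3` divide both
`n₁` and `n₂` and let `ζ = cos(2π/d) + i·sin(2π/d)`, a unit quaternion.  Then the set of points
of `𝔑^l_{n₁,n₂}` fixed by `ζ` under the left action of the unit quaternions equals the image,
under the quotient map, of the subset `(𝕊¹ ∪ 𝕊¹·j) × 𝕊³` of `𝕊³_ℍ × 𝕊³`. -/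
theorem fixedSet_zeta_eq (l n₁ n₂ : ℕ) (hl : 0 < l) (hn₁ : 0 < n₁) (hn₂ : 0 < n₂)
    (hln₁ : Nat.gcd l n₁ = 1) (hln₂ : Nat.gcd l n₂ = 1)
    (d : ℕ) (hd : 3 ≤ d) (hd₁ : d ∣ n₁) (hd₂ : d ∣ n₂)
    (ζ : Metric.sphere (0 : Quaternion ℝ) 1)
    (hζ : (ζ : Quaternion ℝ) = cq ⟨Real.cos (2 * Real.pi / d), Real.sin (2 * Real.pi / d)⟩) :
    {X : NSpace l n₁ n₂ | quatAct l n₁ n₂ ζ X = X} =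
      Quot.mk (NRel l n₁ n₂) ''
        {a : TotalSpace | ∃ x : Circle,
          a.1.1 = cq x ∨ a.1.1 = cq x * jq} := by
  have hequiv := nrel_equivalence l n₁ n₂
  have hd0 : d ≠ 0 := by omega
  have hdR : (0:ℝ) < d := by exact_mod_cast Nat.pos_of_ne_zero hd0
  set θ : ℝ := 2 * Real.pi / d with hθ
  set ξ : Circle := Circle.exp θ with hξ
  -- basic facts about ξ
  have hξc : (ξ : ℂ) = ⟨Real.cos θ, Real.sin θ⟩ := by
    rw [hξ, Circle.coe_exp, Complex.exp_mul_I]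
    apply Complex.ext <;>
      simp [Complex.cos_ofReal_re, Complex.sin_ofReal_re, Complex.cos_ofReal_im,
        Complex.sin_ofReal_im]
  have hζξ : (ζ : Quaternion ℝ) = cq (ξ : ℂ) := by rw [hζ, hξc]
  have hξd : ξ ^ d = 1 := by
    apply Subtype.ext
    have : ((ξ ^ d : Circle) : ℂ) = ((ξ:ℂ)) ^ d := map_pow Circle.coeHom ξ d
    rw [this, hξ, Circle.coe_exp, ← Complex.exp_nat_mul]
    have hdC : (d:ℂ) ≠ 0 := by exact_mod_cast hd0
    rw [show (d:ℂ) * ((θ:ℂ) * Complex.I) = 2*Real.pi*Complex.I by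
      rw [hθ]; push_cast; field_simp]
    exact Complex.exp_two_pi_mul_I
  have hsin : Real.sin θ > 0 := by
    apply Real.sin_pos_of_pos_of_lt_pi
    · rw [hθ]; positivity
    · rw [hθ, div_lt_iff₀ hdR]
      nlinarith [Real.pi_pos, show (3:ℝ) ≤ d by exact_mod_cast hd]
  have hcop : Nat.Coprime l d := Nat.Coprime.coprime_dvd_right hd₁ hln₁
  obtain ⟨k, -, hk⟩ := Nat.exists_mul_mod_eq_one_of_coprime hcop (by omega)
  have hlk : l * k = d * (l * k / d) + 1 := by
    have h := Nat.div_add_mod (l * k) d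
    rw [hk] at h
    exact h.symm
  have hξlk : ξ ^ (l * k) = ξ := by
    rw [hlk, pow_add, pow_mul, hξd, one_pow, one_mul, pow_one]
  have hξn₁ : ξ ^ n₁ = 1 := by
    obtain ⟨c, rfl⟩ := hd₁; rw [pow_mul, hξd, one_pow]
  have hξn₂ : ξ ^ n₂ = 1 := by
    obtain ⟨c, rfl⟩ := hd₂; rw [pow_mul, hξd, one_pow]
  ext X
  induction X using Quot.ind with
  | _ a =>
  obtain ⟨⟨p, z, w⟩, hp, hzw⟩ := a
  simp only [Set.mem_setOf_eq, Set.mem_image]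
  constructor
  · intro h
    rw [quatAct_mk, Quot.eq, hequiv.eqvGen_iff] at h
    obtain ⟨x, hx⟩ := h
    simp only [circleAct, Prod.mk.injEq] at hx
    have hx1 : (ζ : Quaternion ℝ) * p * cq ((x:ℂ) ^ l) = p := hx.1
    set y : ℂ := (x:ℂ) ^ l with hy
    set α : ℂ := ⟨p.re, p.imI⟩ with hα
    set β : ℂ := ⟨p.imJ, p.imK⟩ with hβ
    have hdec : p = cq α + cq β * jq := decomp p
    rw [hζξ, hdec, mul_decomp] at hx1
    obtain ⟨hA, hB⟩ := decomp_inj hx1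
    -- normSq relation
    have hnorm : Complex.normSq α + Complex.normSq β = 1 := by
      have := Quaternion.normSq_eq_norm_mul_self p
      rw [hp, mul_one] at this
      rw [hdec, normSq_cq_add_cq_mul_jq] at this
      linarith
    have hβ0 : β = 0 ∨ α = 0 := by
      by_contra hcon
      push_neg at hcon
      obtain ⟨hβne, hαne⟩ := hcon
      have h1 : (ξ:ℂ) * y = 1 := by
        have h' : ((ξ:ℂ) * y - 1) * α = 0 := by linear_combination hA
        rcases mul_eq_zero.mp h' with h | h
        · exact sub_eq_zero.mp h
        · exact absurd h hαne
      have h2 : (ξ:ℂ) * (starRingEnd ℂ) y = 1 := by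
        have h' : ((ξ:ℂ) * (starRingEnd ℂ) y - 1) * β = 0 := by linear_combination hB
        rcases mul_eq_zero.mp h' with h | h
        · exact sub_eq_zero.mp h
        · exact absurd h hβne
      have hyne : (starRingEnd ℂ) y ≠ 0 := by
        intro h0; rw [h0, mul_zero] at h2; exact one_ne_zero h2.symm
      have h3 : (starRingEnd ℂ) ((ξ:ℂ) * y) = 1 := by rw [h1]; simp
      rw [map_mul] at h3
      have h4 : (starRingEnd ℂ) (ξ:ℂ) = (ξ:ℂ) :=
        mul_right_cancel₀ hyne (h3.trans h2.symm)
      have him : ((ξ:ℂ)).im = 0 := by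
        have := congrArg Complex.im h4
        simp at this
        linarith
      rw [hξc] at him
      exact absurd him (ne_of_gt hsin)
    rcases hβ0 with hβ0 | hα0
    · -- p = cq α with |α| = 1
      have hα1 : ‖α‖ = 1 := by
        rw [hβ0] at hnorm
        simp only [map_zero, add_zero] at hnorm
        have := Complex.normSq_eq_norm_sq α
        rw [hnorm] at this
        have habs : ‖α‖ = 1 := by nlinarith [norm_nonneg α]
        exact habs
      refine ⟨⟨(p, z, w), hp, hzw⟩, ⟨⟨α, mem_sphere_zero_iff_norm.mpr hα1⟩, Or.inl ?_⟩, rfl⟩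
      show p = cq α
      rw [hdec, hβ0, cq_zero, zero_mul, add_zero]
    · -- p = cq β * jq with |β| = 1
      have hβ1 : ‖β‖ = 1 := by
        rw [hα0] at hnorm
        simp only [map_zero, zero_add] at hnorm
        have := Complex.normSq_eq_norm_sq β
        rw [hnorm] at this
        have habs : ‖β‖ = 1 := by nlinarith [norm_nonneg β]
        exact habs
      refine ⟨⟨(p, z, w), hp, hzw⟩, ⟨⟨β, mem_sphere_zero_iff_norm.mpr hβ1⟩, Or.inr ?_⟩, rfl⟩
      show p = cq β * jq
      rw [hdec, hα0, cq_zero, zero_add]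
  · rintro ⟨⟨⟨q, z', w'⟩, hq, hzw'⟩, ⟨u, hu⟩, heq⟩
    rw [← heq, quatAct_mk]
    apply Quot.sound
    have hune : (u:ℂ) ≠ 0 := Circle.coe_ne_zero u
    have hu' : q = cq ↑u ∨ q = cq ↑u * jq := hu
    rcases hu' with hu | hu
    · -- q = cq u ; use x = (ξ^k)⁻¹
      refine ⟨(ξ ^ k)⁻¹, ?_⟩
      have hxl : ((ξ ^ k)⁻¹ : Circle) ^ l = ξ⁻¹ := by
        rw [inv_pow, ← pow_mul, mul_comm k l, hξlk]
      have hxn₁ : ((ξ ^ k)⁻¹ : Circle) ^ n₁ = 1 := by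
        rw [inv_pow, ← pow_mul, mul_comm k n₁, pow_mul, hξn₁, one_pow, inv_one]
      have hxn₂ : ((ξ ^ k)⁻¹ : Circle) ^ n₂ = 1 := by
        rw [inv_pow, ← pow_mul, mul_comm k n₂, pow_mul, hξn₂, one_pow, inv_one]
      have hcoe : ∀ (v : Circle) (m : ℕ), ((v:ℂ)) ^ m = ((v ^ m : Circle) : ℂ) :=
        fun v m => (map_pow Circle.coeHom v m).symm
      simp only [circleAct, Prod.mk.injEq, hcoe, hxl, hxn₁, hxn₂]
      refine ⟨?_, by simp, by simp⟩
      rw [hζξ, hu, ← cq_mul, ← cq_mul]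
      congr 1
      rw [Circle.coe_inv]
      field_simp
    · -- q = cq u * jq ; use x = ξ^k
      refine ⟨ξ ^ k, ?_⟩
      have hxl : (ξ ^ k : Circle) ^ l = ξ := by rw [← pow_mul, mul_comm k l, hξlk]
      have hxn₁ : (ξ ^ k : Circle) ^ n₁ = 1 := by
        rw [← pow_mul, mul_comm k n₁, pow_mul, hξn₁, one_pow]
      have hxn₂ : (ξ ^ k : Circle) ^ n₂ = 1 := by
        rw [← pow_mul, mul_comm k n₂, pow_mul, hξn₂, one_pow]
      have hcoe : ∀ (v : Circle) (m : ℕ), ((v:ℂ)) ^ m = ((v ^ m : Circle) : ℂ) :=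
        fun v m => (map_pow Circle.coeHom v m).symm
      simp only [circleAct, Prod.mk.injEq, hcoe, hxl, hxn₁, hxn₂]
      refine ⟨?_, by simp, by simp⟩
      rw [hζξ, hu]
      have hone : (ξ:ℂ) * (starRingEnd ℂ) (ξ:ℂ) = 1 := by
        rw [Complex.mul_conj, Circle.normSq_coe, Complex.ofReal_one]
      have hconj : (ξ:ℂ) * (u:ℂ) * (starRingEnd ℂ) (ξ:ℂ) = (u:ℂ) := by
        rw [mul_comm (ξ:ℂ) (u:ℂ), mul_assoc, hone, mul_one]
      have key : cq (ξ:ℂ) * (cq 0 + cq (u:ℂ) * jq) * cq (ξ:ℂ)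
          = cq 0 + cq (u:ℂ) * jq := by
        rw [mul_decomp, mul_zero, zero_mul, hconj]
      rw [cq_zero, zero_add] at key
      exact key
end
end

section
/- Let l, n₁, n₂ be positive integers. Consider the circle action on 𝕊¹ × 𝕊³ given by x·(y,(z₁,z₂)) = (y·x^l, (x^{n₁}z₁, x^{n₂}z₂)), where y ∈ 𝕊¹ and (z₁,z₂) ∈ 𝕊³ ⊂ ℂ². Then the orbit space of this action is homeomorphic to the orbit space of 𝕊³ by the action of the group μ_l of l-th roots of unity given by ξ·(z₁,z₂) = (ξ^{n₁}z₁, ξ^{n₂}z₂); in particular, for l ≥ 1 it is homeomorphic to the corresponding lens space 𝕊³/ℤ_l. -/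
noncomputable section

/-- The unit sphere `𝕊³ ⊂ ℂ²`: pairs `(z₁,z₂)` with `|z₁|² + |z₂|² = 1`. -/
abbrev SphereC2 : Type :=
  {zw : ℂ × ℂ // Complex.normSq zw.1 + Complex.normSq zw.2 = 1}

/-- The orbit relation of the circle action
`x·(y,(z₁,z₂)) = (y·x^l, (x^{n₁}z₁, x^{n₂}z₂))` on `𝕊¹ × 𝕊³`. -/
def circleRel (l n₁ n₂ : ℕ) (a b : Circle × SphereC2) : Prop :=
  ∃ x : Circle, a.1 * x ^ l = b.1 ∧
    ((x : ℂ) ^ n₁ * a.2.1.1, (x : ℂ) ^ n₂ * a.2.1.2) = b.2.1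

/-- The orbit relation of the action of the group `μ_l` of `l`-th roots of unity on `𝕊³`,
`ξ·(z₁,z₂) = (ξ^{n₁}z₁, ξ^{n₂}z₂)`; its quotient is the lens space `𝕊³/ℤ_l`. -/
def lensRel (l n₁ n₂ : ℕ) (a b : SphereC2) : Prop :=
  ∃ ξ : ℂ, ξ ^ l = 1 ∧ (ξ ^ n₁ * a.1.1, ξ ^ n₂ * a.1.2) = b.1

namespace LensAux

open Complex

/-- Action of a circle element on the sphere. -/
def actS (n₁ n₂ : ℕ) (x : Circle) (z : SphereC2) : SphereC2 :=
  ⟨((x : ℂ) ^ n₁ * z.1.1, (x : ℂ) ^ n₂ * z.1.2), by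
    have h := z.2
    simp only [map_mul, map_pow, Circle.normSq_coe, one_pow, one_mul]
    exact h⟩

lemma actS_mul (n₁ n₂ : ℕ) (x x' : Circle) (z : SphereC2) :
    actS n₁ n₂ x' (actS n₁ n₂ x z) = actS n₁ n₂ (x' * x) z := by
  apply Subtype.ext
  simp only [actS, Circle.coe_mul, mul_pow]
  exact Prod.ext (by ring) (by ring)

lemma contActS (n₁ n₂ : ℕ) :
    Continuous fun q : Circle × SphereC2 => actS n₁ n₂ q.1 q.2 := by
  apply Continuous.subtype_mk
  refine Continuous.prodMk ?_ ?_
  · exact ((continuous_subtype_val.comp continuous_fst).pow n₁).mul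
      (continuous_fst.comp (continuous_subtype_val.comp continuous_snd))
  · exact ((continuous_subtype_val.comp continuous_fst).pow n₂).mul
      (continuous_snd.comp (continuous_subtype_val.comp continuous_snd))

lemma coe_pow' (x : Circle) (n : ℕ) : ((x ^ n : Circle) : ℂ) = (x : ℂ) ^ n :=
  map_pow Circle.coeHom x n

lemma exp_pow (x : ℝ) (n : ℕ) : Circle.exp x ^ n = Circle.exp (n * x) := by
  induction n with
  | zero => simp
  | succ k ih =>
    rw [pow_succ, ih, ← Circle.exp_add]
    congr 1
    push_cast
    ring

/-- A canonical `l`-th root of `y⁻¹`. -/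
def root (l : ℕ) (y : Circle) : Circle := Circle.exp (-(Complex.arg y) / l)

/-- Another branch of the `l`-th root of `y⁻¹`, continuous near `y = -1`. -/
def root2 (l : ℕ) (y : Circle) : Circle :=
  Circle.exp (-(Complex.arg (-(y : ℂ)) + Real.pi) / l)

lemma root_pow {l : ℕ} (hl : 0 < l) (y : Circle) : root l y ^ l = y⁻¹ := by
  rw [root, exp_pow]
  have hl' : (l : ℝ) ≠ 0 := Nat.cast_ne_zero.mpr hl.ne'
  rw [mul_div_cancel₀ _ hl']
  rw [Circle.exp_neg, Circle.exp_arg]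

lemma root2_pow {l : ℕ} (hl : 0 < l) (y : Circle) : root2 l y ^ l = y⁻¹ := by
  rw [root2, exp_pow]
  have hl' : (l : ℝ) ≠ 0 := Nat.cast_ne_zero.mpr hl.ne'
  rw [mul_div_cancel₀ _ hl']
  rw [← Circle.coe_inj]
  rw [Circle.coe_exp, Circle.coe_inv]
  have habs : ‖(-(y : ℂ))‖ = 1 := by simp [Circle.norm_coe]
  have harg : Complex.exp (Complex.arg (-(y : ℂ)) * Complex.I) = -(y : ℂ) := by
    have := Complex.norm_mul_exp_arg_mul_I (-(y : ℂ))
    rwa [habs, Complex.ofReal_one, one_mul] at this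
  have : ((-(Complex.arg (-(y : ℂ)) + Real.pi) : ℝ) : ℂ) * Complex.I =
      -(Complex.arg (-(y : ℂ)) * Complex.I) + -(Real.pi * Complex.I) := by
    push_cast; ring
  rw [this, Complex.exp_add, Complex.exp_neg, Complex.exp_neg, harg,
    Complex.exp_pi_mul_I]
  field_simp

lemma mk_act_indep (l n₁ n₂ : ℕ) {x x' : Circle} (h : x ^ l = x' ^ l) (z : SphereC2) :
    Quot.mk (lensRel l n₁ n₂) (actS n₁ n₂ x z) = Quot.mk (lensRel l n₁ n₂) (actS n₁ n₂ x' z) := by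
  apply Quot.sound
  refine ⟨(x' : ℂ) * (x : ℂ)⁻¹, ?_, ?_⟩
  · have hx : (x : ℂ) ≠ 0 := Circle.coe_ne_zero x
    have hcoe : ((x : ℂ)) ^ l = ((x' : ℂ)) ^ l := by
      rw [← coe_pow', ← coe_pow', h]
    rw [mul_pow, inv_pow, ← hcoe]
    field_simp
  · apply Prod.ext <;>
    · simp only [actS, mul_pow, inv_pow]
      have hx : (x : ℂ) ^ n₁ ≠ 0 := pow_ne_zero _ (Circle.coe_ne_zero x)
      have hx2 : (x : ℂ) ^ n₂ ≠ 0 := pow_ne_zero _ (Circle.coe_ne_zero x)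
      field_simp

/-- The forward map to the lens quotient. -/
def Fm (l n₁ n₂ : ℕ) (p : Circle × SphereC2) : Quot (lensRel l n₁ n₂) :=
  Quot.mk _ (actS n₁ n₂ (root l p.1) p.2)

lemma Fm_eq_G {l : ℕ} (hl : 0 < l) (n₁ n₂ : ℕ) :
    Fm l n₁ n₂ = fun p => Quot.mk _ (actS n₁ n₂ (root2 l p.1) p.2) := by
  funext p
  exact mk_act_indep l n₁ n₂ (by rw [root_pow hl, root2_pow hl]) p.2

lemma mem_slit_of_ne {y : Circle} (h : (y : ℂ) ≠ -1) : (y : ℂ) ∈ Complex.slitPlane := by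
  rw [Complex.mem_slitPlane_iff]
  by_contra hc
  push_neg at hc
  obtain ⟨hre, him⟩ := hc
  have hn : Complex.normSq (y : ℂ) = 1 := Circle.normSq_coe y
  rw [Complex.normSq_apply, him] at hn
  have hre1 : (y : ℂ).re = -1 := by nlinarith
  exact h (Complex.ext (by simp [hre1]) (by simp [him]))

set_option maxHeartbeats 1000000 in
lemma contFm {l : ℕ} (hl : 0 < l) (n₁ n₂ : ℕ) : Continuous (Fm l n₁ n₂) := by
  rw [continuous_iff_continuousAt]
  intro p
  by_cases h : (p.1 : ℂ) = -1
  · rw [Fm_eq_G hl]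
    have hslit : -((p.1 : ℂ)) ∈ Complex.slitPlane := by
      rw [h]; simp [Complex.mem_slitPlane_iff]
    have hneg : ContinuousAt (fun y : Circle => -(y : ℂ)) p.1 :=
      (continuous_subtype_val.neg).continuousAt
    have harg : ContinuousAt (fun y : Circle => Complex.arg (-(y : ℂ))) p.1 :=
      ContinuousAt.comp (g := Complex.arg) (f := fun y : Circle => -(y : ℂ))
        (Complex.continuousAt_arg hslit) hneg
    have hroot : ContinuousAt (root2 l) p.1 := by
      apply Circle.exp.continuous.continuousAt.comp
      exact (harg.add continuousAt_const).neg.div_const _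
    have hinner : ContinuousAt
        (fun p : Circle × SphereC2 => actS n₁ n₂ (root2 l p.1) p.2) p :=
      (contActS n₁ n₂).continuousAt.comp
        ((hroot.comp continuous_fst.continuousAt).prodMk continuous_snd.continuousAt)
    exact continuous_quot_mk.continuousAt.comp hinner
  · unfold Fm
    have hslit := mem_slit_of_ne h
    have harg : ContinuousAt (fun y : Circle => Complex.arg (y : ℂ)) p.1 :=
      (Complex.continuousAt_arg hslit).comp continuous_subtype_val.continuousAt
    have hroot : ContinuousAt (root l) p.1 := by
      apply Circle.exp.continuous.continuousAt.comp
      exact harg.neg.div_const _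
    have hinner : ContinuousAt
        (fun p : Circle × SphereC2 => actS n₁ n₂ (root l p.1) p.2) p :=
      (contActS n₁ n₂).continuousAt.comp
        ((hroot.comp continuous_fst.continuousAt).prodMk continuous_snd.continuousAt)
    exact continuous_quot_mk.continuousAt.comp hinner

lemma Fm_resp {l : ℕ} (hl : 0 < l) (n₁ n₂ : ℕ) (a b : Circle × SphereC2)
    (hab : circleRel l n₁ n₂ a b) : Fm l n₁ n₂ a = Fm l n₁ n₂ b := by
  obtain ⟨x, hx1, hx2⟩ := hab
  have hb2 : b.2 = actS n₁ n₂ x a.2 := Subtype.ext hx2.symm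
  unfold Fm
  rw [hb2, actS_mul]
  apply mk_act_indep
  rw [mul_pow, root_pow hl, root_pow hl, ← hx1, mul_inv, inv_mul_cancel_right]

/-- The backward map. -/
def Gm (l n₁ n₂ : ℕ) (z : SphereC2) : Quot (circleRel l n₁ n₂) :=
  Quot.mk _ ((1 : Circle), z)

lemma Gm_resp {l : ℕ} (hl : 0 < l) (n₁ n₂ : ℕ) (a b : SphereC2)
    (hab : lensRel l n₁ n₂ a b) : Gm l n₁ n₂ a = Gm l n₁ n₂ b := by
  obtain ⟨ξ, hξ, hact⟩ := hab
  have hnorm : ‖ξ‖ = 1 := Complex.norm_eq_one_of_pow_eq_one hξ hl.ne'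
  have hmem : ξ ∈ Submonoid.unitSphere ℂ := mem_sphere_zero_iff_norm.mpr hnorm
  refine Quot.sound ⟨(show Circle from ⟨ξ, hmem⟩), ?_, hact⟩
  rw [one_mul, ← Circle.coe_inj, coe_pow']
  simpa using hξ

end LensAux

open LensAux in
/-- **A lens space as an orbit space.**
Let `l, n₁, n₂` be positive integers.  The orbit space of the circle action on `𝕊¹ × 𝕊³`
given by `x·(y,(z₁,z₂)) = (y·x^l, (x^{n₁}z₁, x^{n₂}z₂))` is homeomorphic to the orbit space
of `𝕊³` under the action of the `l`-th roots of unity `ξ·(z₁,z₂) = (ξ^{n₁}z₁, ξ^{n₂}z₂)`,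
i.e. to the lens space `𝕊³/ℤ_l`. -/
theorem circle_orbitSpace_homeomorph_lensSpace (l n₁ n₂ : ℕ)
    (hl : 0 < l) (hn₁ : 0 < n₁) (hn₂ : 0 < n₂) :
    Nonempty (Quot (circleRel l n₁ n₂) ≃ₜ Quot (lensRel l n₁ n₂)) := by
  refine ⟨{
    toFun := Quot.lift (Fm l n₁ n₂) (Fm_resp hl n₁ n₂)
    invFun := Quot.lift (Gm l n₁ n₂) (Gm_resp hl n₁ n₂)
    left_inv := ?_
    right_inv := ?_
    continuous_toFun := continuous_quot_lift _ (contFm hl n₁ n₂)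
    continuous_invFun := continuous_quot_lift _
      (continuous_quot_mk.comp (continuous_const.prodMk continuous_id)) }⟩
  · refine Quot.ind fun p => ?_
    show Quot.mk _ ((1 : Circle), actS n₁ n₂ (root l p.1) p.2) = Quot.mk _ p
    refine (Quot.sound ⟨root l p.1, ?_, rfl⟩).symm
    rw [root_pow hl]
    simp
  · refine Quot.ind fun z => ?_
    show Quot.mk _ (actS n₁ n₂ (root l 1) z) = Quot.mk _ z
    refine (Quot.sound ⟨(root l 1 : ℂ), ?_, rfl⟩).symm
    have h1 : root l 1 ^ l = 1 := by rw [root_pow hl]; simp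
    rw [← coe_pow', h1, Circle.coe_one]
end
end

section
/- Let l, m, n be positive integers with gcd(l,m) = gcd(l,n) = 1, and consider the left action of the group of unit quaternions on 𝔑^l_{m,n}. For a point [(p,(z,w))] ∈ 𝔑^l_{m,n}, the stabilizer subgroup is p·μ_d·p⁻¹, the conjugate by p of the cyclic group μ_d = {x ∈ 𝕊¹ : x^d = 1} of d-th roots of unity, where d = m if w = 0, d = n if z = 0, and d = gcd(m,n) if both z ≠ 0 and w ≠ 0. In particular the isotropy groups of the action are cyclic of orders m, n and gcd(m,n). -/
noncomputable section

open Quaternion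

/-- The stabilizer of a point `X ∈ 𝔑^l_{m,n}` for the left action of the unit quaternions. -/
def stabilizerSet (l m n : ℕ) (X : NSpace l m n) : Set (Metric.sphere (0 : Quaternion ℝ) 1) :=
  {g | quatAct l m n g X = X}

/-- The conjugate `p·μ_d·p⁻¹` of the group `μ_d = {x ∈ 𝕊¹ : x^d = 1}` of `d`-th roots of
unity by the quaternion `p`, as a subset of the unit quaternions. -/
def conjRootsOfUnity (p : Quaternion ℝ) (d : ℕ) : Set (Metric.sphere (0 : Quaternion ℝ) 1) :=
  {g | ∃ x : ℂ, x ^ d = 1 ∧ (g : Quaternion ℝ) = p * cq x * p⁻¹}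

lemma cq_pow (x : ℂ) (k : ℕ) : cq (x ^ k) = cq x ^ k := by
  induction k with
  | zero => simp [cq_one]
  | succ k ih => rw [pow_succ, pow_succ, cq_mul, ih]

lemma circleAct_comp (l m n : ℕ) (x y : Circle) (a : Quaternion ℝ × (ℂ × ℂ)) :
    circleAct l m n x (circleAct l m n y a) = circleAct l m n (y * x) a := by
  simp only [circleAct, Circle.coe_mul, mul_pow, cq_mul, Prod.mk.injEq]
  exact ⟨mul_assoc a.1 (cq ((y:ℂ)^l)) (cq ((x:ℂ)^l)), by ring, by ring⟩

lemma quot_mk_eq_iff (l m n : ℕ) (a b : TotalSpace) :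
    Quot.mk (NRel l m n) a = Quot.mk (NRel l m n) b ↔ NRel l m n a b := by
  rw [Quot.eq, (nrel_equivalence l m n).eqvGen_iff]

lemma stab_eq (l m n d : ℕ) (hd : 0 < d) (hld : Nat.Coprime l d) (a : TotalSpace)
    (hfix : ∀ x : ℂ, (x ^ d = 1 ↔ x ^ m * a.1.2.1 = a.1.2.1 ∧ x ^ n * a.1.2.2 = a.1.2.2)) :
    stabilizerSet l m n (Quot.mk (NRel l m n) a) = conjRootsOfUnity a.1.1 d := by
  obtain ⟨⟨p, z, w⟩, hp, hzw⟩ := a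
  simp only at hfix
  have hp0 : p ≠ 0 := by
    intro h; rw [h, norm_zero] at hp; norm_num at hp
  ext g
  simp only [stabilizerSet, conjRootsOfUnity, Set.mem_setOf_eq, quatAct, quot_mk_eq_iff]
  constructor
  · rintro ⟨x, hx⟩
    simp only [circleAct, Prod.mk.injEq] at hx
    obtain ⟨h1, h2, h3⟩ := hx
    have hxd : (x : ℂ) ^ d = 1 := (hfix x).mpr ⟨h2, h3⟩
    have hx0 : (x : ℂ) ≠ 0 := Circle.coe_ne_zero x
    refine ⟨(x : ℂ)⁻¹ ^ l, ?_, ?_⟩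
    · rw [← pow_mul, mul_comm, pow_mul, inv_pow, hxd, inv_one, one_pow]
    · have hc : cq ((x : ℂ) ^ l) * cq ((x : ℂ)⁻¹ ^ l) = 1 := by
        rw [← cq_mul, ← mul_pow, mul_inv_cancel₀ hx0, one_pow, cq_one]
      have h4 : (g : Quaternion ℝ) * p = p * cq ((x : ℂ)⁻¹ ^ l) := by
        have h5 : ((g : Quaternion ℝ) * p * cq ((x : ℂ) ^ l)) * cq ((x : ℂ)⁻¹ ^ l)
            = p * cq ((x : ℂ)⁻¹ ^ l) := by rw [h1]
        rwa [mul_assoc ((g : Quaternion ℝ) * p) _ _, hc, mul_one] at h5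
      have h6 : ((g : Quaternion ℝ) * p) * p⁻¹ = (p * cq ((x : ℂ)⁻¹ ^ l)) * p⁻¹ := by
        rw [h4]
      rwa [mul_assoc ((g : Quaternion ℝ)) p p⁻¹, mul_inv_cancel₀ hp0, mul_one] at h6
  · rintro ⟨y, hyd, hg⟩
    have hy0 : y ≠ 0 := by
      intro h; rw [h, zero_pow hd.ne'] at hyd; exact zero_ne_one hyd
    have hynorm : ‖y‖ = 1 := Complex.norm_eq_one_of_pow_eq_one hyd hd.ne'
    -- Bezout
    have hbez : (1 : ℤ) = l * Nat.gcdA l d + d * Nat.gcdB l d := by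
      have := Nat.gcd_eq_gcd_ab l d
      rwa [hld, Nat.cast_one] at this
    set Y : ℂ := y ^ (-(Nat.gcdA l d)) with hYdef
    have hY0 : Y ≠ 0 := zpow_ne_zero _ hy0
    have hyz : y ^ (d : ℤ) = 1 := by rw [zpow_natCast, hyd]
    have hY1 : Y ^ d = 1 := by
      rw [hYdef, ← zpow_natCast, ← zpow_mul, mul_comm, zpow_mul, hyz, one_zpow]
    have hYl : Y ^ l = y⁻¹ := by
      rw [hYdef, ← zpow_natCast, ← zpow_mul]
      have : -(Nat.gcdA l d) * l = d * Nat.gcdB l d + (-1) := by linarith [hbez]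
      rw [this, zpow_add₀ hy0, zpow_mul, hyz, one_zpow, one_mul, zpow_neg, zpow_one]
    have hYnorm : ‖Y‖ = 1 := by
      rw [hYdef, norm_zpow, hynorm, one_zpow]
    refine ⟨⟨Y, mem_sphere_zero_iff_norm.mpr hYnorm⟩, ?_⟩
    have hfixY := (hfix Y).mp hY1
    simp only [circleAct, Prod.mk.injEq]
    refine ⟨?_, hfixY.1, hfixY.2⟩
    show (g : Quaternion ℝ) * p * cq (Y ^ l) = p
    rw [hYl, hg]
    simp [mul_assoc, inv_mul_cancel_left₀ hp0, ← cq_mul, mul_inv_cancel₀ hy0, cq_one]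

/-- **Isotropy groups of the unit-quaternion action on `𝔑^l_{m,n}`.**
Let `l, m, n` be positive integers with `gcd(l,m) = gcd(l,n) = 1`.  For a point
`[(p,(z,w))] ∈ 𝔑^l_{m,n}`, the stabilizer subgroup of the left action of the unit quaternions
is `p·μ_d·p⁻¹`, the conjugate by `p` of the cyclic group of `d`-th roots of unity, where
`d = m` if `w = 0`, `d = n` if `z = 0`, and `d = gcd(m,n)` if both `z ≠ 0` and `w ≠ 0`. -/
theorem stabilizer_eq_conj_rootsOfUnity (l m n : ℕ)
    (hl : 0 < l) (hm : 0 < m) (hn : 0 < n)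
    (hlm : Nat.gcd l m = 1) (hln : Nat.gcd l n = 1)
    (a : TotalSpace) :
    (a.1.2.2 = 0 →
      stabilizerSet l m n (Quot.mk (NRel l m n) a) = conjRootsOfUnity a.1.1 m) ∧
    (a.1.2.1 = 0 →
      stabilizerSet l m n (Quot.mk (NRel l m n) a) = conjRootsOfUnity a.1.1 n) ∧
    (a.1.2.1 ≠ 0 → a.1.2.2 ≠ 0 →
      stabilizerSet l m n (Quot.mk (NRel l m n) a) =
        conjRootsOfUnity a.1.1 (Nat.gcd m n)) := by
  obtain ⟨hanorm, hzw⟩ := a.2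
  refine ⟨?_, ?_, ?_⟩
  · intro hw
    have hz0 : a.1.2.1 ≠ 0 := by
      intro h; rw [h, hw] at hzw; simp at hzw
    refine stab_eq l m n m hm hlm a (fun x => ?_)
    constructor
    · intro h; rw [h, hw]; simp
    · rintro ⟨h1, -⟩
      have : x ^ m * a.1.2.1 = 1 * a.1.2.1 := by rw [one_mul, h1]
      exact mul_right_cancel₀ hz0 this
  · intro hz
    have hw0 : a.1.2.2 ≠ 0 := by
      intro h; rw [h, hz] at hzw; simp at hzw
    refine stab_eq l m n n hn hln a (fun x => ?_)
    constructor
    · intro h; rw [h, hz]; simp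
    · rintro ⟨-, h2⟩
      have : x ^ n * a.1.2.2 = 1 * a.1.2.2 := by rw [one_mul, h2]
      exact mul_right_cancel₀ hw0 this
  · intro hz0 hw0
    have hgcdpos : 0 < Nat.gcd m n := Nat.gcd_pos_of_pos_left n hm
    have hcop : Nat.Coprime l (Nat.gcd m n) :=
      Nat.Coprime.coprime_dvd_right (Nat.gcd_dvd_left m n) hlm
    refine stab_eq l m n (Nat.gcd m n) hgcdpos hcop a (fun x => ?_)
    constructor
    · intro h
      have h1 : x ^ m = 1 := orderOf_dvd_iff_pow_eq_one.mp
        ((orderOf_dvd_of_pow_eq_one h).trans (Nat.gcd_dvd_left m n))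
      have h2 : x ^ n = 1 := orderOf_dvd_iff_pow_eq_one.mp
        ((orderOf_dvd_of_pow_eq_one h).trans (Nat.gcd_dvd_right m n))
      rw [h1, h2, one_mul, one_mul]
      exact ⟨rfl, rfl⟩
    · rintro ⟨h1, h2⟩
      have hm1 : x ^ m = 1 :=
        mul_right_cancel₀ hz0 (by rw [one_mul, h1])
      have hn1 : x ^ n = 1 :=
        mul_right_cancel₀ hw0 (by rw [one_mul, h2])
      exact orderOf_dvd_iff_pow_eq_one.mp
        (Nat.dvd_gcd (orderOf_dvd_of_pow_eq_one hm1) (orderOf_dvd_of_pow_eq_one hn1))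
end
end
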